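/- For every two solutions x, y : [0,T] → ℝⁿ of the differential equation u' = f(u) such that x(t) ∈ D and y(t) ∈ D for all t ∈ [0,T], one has ‖x(t) − y(t)‖₁ ≤ ‖x(0) − y(0)‖₁ for all t ∈ [0,T]; i.e., the dynamics are l1-nonexpansive on D. -/

import Mathlib

open Set Filter Real
open scoped Topology


open Set Filter Real
open scoped Topology

lemma abs_real_sign_le (x : ℝ) : |Real.sign x| ≤ 1 := by
  rcases lt_trichotomy x 0 with h | h | h
  · simp [Real.sign_of_neg h]
  · simp [h]
  · simp [Real.sign_of_pos h]

lemma real_sign_mul_self (x : ℝ) : Real.sign x * x = |x| := by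
  rcases lt_trichotomy x 0 with h | h | h
  · rw [Real.sign_of_neg h, abs_of_neg h]; ring
  · simp [h]
  · rw [Real.sign_of_pos h, abs_of_pos h]; ring

/-- right derivative of `|w|` when `w t = 0`. -/
lemma hasDerivWithinAt_abs_of_zero {w : ℝ → ℝ} {d t : ℝ} {s : Set ℝ}
    (hs : s ⊆ Ici t) (h : HasDerivWithinAt w d s t) (hw : w t = 0) :
    HasDerivWithinAt (fun z => |w z|) |d| s t := by
  rw [hasDerivWithinAt_iff_tendsto_slope] at h ⊢
  have habs : Tendsto (fun z => |slope w t z|) (𝓝[s \ {t}] t) (𝓝 |d|) :=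
    (continuous_abs.tendsto d).comp h
  refine habs.congr' ?_
  filter_upwards [self_mem_nhdsWithin] with z hz
  have hzt : t < z := lt_of_le_of_ne (hs hz.1) (Ne.symm hz.2)
  have hpos : (0:ℝ) < z - t := sub_pos.2 hzt
  simp only [slope_def_field, hw, abs_zero, sub_zero]
  rw [abs_div, abs_of_pos hpos]

/-- derivative of `|w|` when `w t ≠ 0`. -/
lemma hasDerivWithinAt_abs_of_ne {w : ℝ → ℝ} {d t : ℝ} {s : Set ℝ}
    (h : HasDerivWithinAt w d s t) (hw : w t ≠ 0) :
    HasDerivWithinAt (fun z => |w z|) (Real.sign (w t) * d) s t := by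
  rcases hw.lt_or_gt with hneg | hpos
  · have hev : ∀ᶠ z in 𝓝[s] t, w z < 0 := h.continuousWithinAt (Iio_mem_nhds hneg)
    rw [Real.sign_of_neg hneg]
    have : HasDerivWithinAt (fun z => -(w z)) (-d) s t := h.neg
    refine (this.congr_of_eventuallyEq ?_ (by rw [abs_of_neg hneg])).congr_deriv (by ring)
    · filter_upwards [hev] with z hz using abs_of_neg hz
  · have hev : ∀ᶠ z in 𝓝[s] t, 0 < w z := h.continuousWithinAt (Ioi_mem_nhds hpos)
    rw [Real.sign_of_pos hpos]
    refine (h.congr_of_eventuallyEq ?_ (by rw [abs_of_pos hpos])).congr_deriv (by ring)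
    · filter_upwards [hev] with z hz using abs_of_pos hz

lemma sum_mul_fderiv_nonpos {n : ℕ} (L : (Fin n → ℝ) →L[ℝ] (Fin n → ℝ))
    (hM : ∀ i j, i ≠ j → 0 ≤ L (Pi.single j 1) i)
    (hc : ∀ j, ∑ i, L (Pi.single j 1) i ≤ 0)
    (v ε : Fin n → ℝ) (hε : ∀ i, |ε i| ≤ 1)
    (hsgn : ∀ j, v j ≠ 0 → ε j = Real.sign (v j)) :
    ∑ i, ε i * L v i ≤ 0 := by
  have hv : v = ∑ j, v j • (Pi.single j 1 : Fin n → ℝ) := by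
    funext i
    simp [Finset.sum_apply, Pi.single_apply]
  have hLv : ∀ i, L v i = ∑ j, v j * L (Pi.single j 1) i := by
    intro i
    conv_lhs => rw [hv]
    rw [map_sum]
    simp
  calc ∑ i, ε i * L v i = ∑ j, ∑ i, ε i * (v j * L (Pi.single j 1) i) := by
        simp only [hLv, Finset.mul_sum]
        exact Finset.sum_comm
    _ ≤ 0 := by
        apply Finset.sum_nonpos
        intro j _
        by_cases hvj : v j = 0
        · simp [hvj]
        have hterm : ∀ i, ε i * (v j * L (Pi.single j 1) i) ≤ |v j| * L (Pi.single j 1) i := by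
          intro i
          by_cases hij : i = j
          · subst hij
            rw [hsgn i hvj]
            have : Real.sign (v i) * (v i * L (Pi.single i 1) i)
                = (Real.sign (v i) * v i) * L (Pi.single i 1) i := by ring
            rw [this, real_sign_mul_self]
          · have h1 : ε i * v j ≤ |v j| := by
              refine le_trans (le_abs_self _) ?_
              rw [abs_mul]
              exact mul_le_of_le_one_left (abs_nonneg _) (hε i)
            have h2 : 0 ≤ L (Pi.single j 1) i := hM i j hij
            calc ε i * (v j * L (Pi.single j 1) i) = (ε i * v j) * L (Pi.single j 1) i := by ring
              _ ≤ |v j| * L (Pi.single j 1) i := mul_le_mul_of_nonneg_right h1 h2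
        calc ∑ i, ε i * (v j * L (Pi.single j 1) i) ≤ ∑ i, |v j| * L (Pi.single j 1) i :=
              Finset.sum_le_sum fun i _ => hterm i
          _ = |v j| * ∑ i, L (Pi.single j 1) i := by rw [Finset.mul_sum]
          _ ≤ 0 := mul_nonpos_of_nonneg_of_nonpos (abs_nonneg _) (hc j)

lemma dissip {n : ℕ} {D U : Set (Fin n → ℝ)} {f : (Fin n → ℝ) → Fin n → ℝ}
    (hD : Convex ℝ D) (hU : IsOpen U) (hDU : D ⊆ U) (hf : ContDiffOn ℝ 1 f U)
    (hMetzler : ∀ x ∈ D, ∀ i j, i ≠ j → 0 ≤ fderiv ℝ f x (Pi.single j 1) i)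
    (hcol : ∀ x ∈ D, ∀ j, ∑ i, fderiv ℝ f x (Pi.single j 1) i ≤ 0)
    {a b : Fin n → ℝ} (ha : a ∈ D) (hb : b ∈ D)
    (ε : Fin n → ℝ) (hε : ∀ i, |ε i| ≤ 1)
    (hsgn : ∀ j, a j - b j ≠ 0 → ε j = Real.sign (a j - b j)) :
    ∑ i, ε i * (f a i - f b i) ≤ 0 := by
  set γ : ℝ → Fin n → ℝ := fun s => b + s • (a - b) with hγdef
  have hγD : ∀ s ∈ Icc (0:ℝ) 1, γ s ∈ D := by
    intro s hs
    have heq : γ s = (1 - s) • b + s • a := by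
      funext i
      simp [hγdef, Pi.smul_apply, smul_eq_mul]
      ring
    rw [heq]
    exact hD hb ha (by linarith [hs.2]) hs.1 (by ring)
  have hψ : ∀ s ∈ Icc (0:ℝ) 1, HasDerivAt (fun s => ∑ i, ε i * f (γ s) i)
      (∑ i, ε i * (fderiv ℝ f (γ s)) (a - b) i) s := by
    intro s hs
    have hγ' : HasDerivAt γ (a - b) s := by
      have h1 : HasDerivAt (fun u : ℝ => u • (a - b)) ((1:ℝ) • (a - b)) s :=
        (hasDerivAt_id s).smul_const (a - b)
      simpa [hγdef, one_smul] using h1.const_add b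
    have hdiff : DifferentiableAt ℝ f (γ s) :=
      (hf.differentiableOn one_ne_zero).differentiableAt (hU.mem_nhds (hDU (hγD s hs)))
    have hcomp : HasDerivAt (fun u => f (γ u)) ((fderiv ℝ f (γ s)) (a - b)) s :=
      hdiff.hasFDerivAt.comp_hasDerivAt s hγ'
    exact HasDerivAt.fun_sum fun i _ => ((hasDerivAt_pi.1 hcomp) i).const_mul (ε i)
  have anti : AntitoneOn (fun s => ∑ i, ε i * f (γ s) i) (Icc 0 1) := by
    apply antitoneOn_of_deriv_nonpos (convex_Icc (0:ℝ) 1)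
    · exact fun s hs => (hψ s hs).continuousAt.continuousWithinAt
    · intro s hs
      rw [interior_Icc] at hs
      exact (hψ s (Ioo_subset_Icc_self hs)).differentiableAt.differentiableWithinAt
    · intro s hs
      rw [interior_Icc] at hs
      rw [(hψ s (Ioo_subset_Icc_self hs)).deriv]
      have hmem := hγD s (Ioo_subset_Icc_self hs)
      refine sum_mul_fderiv_nonpos (fderiv ℝ f (γ s)) (hMetzler _ hmem) (hcol _ hmem)
        (a - b) ε hε ?_
      intro j hj
      have : (a - b) j = a j - b j := rfl
      rw [this] at hj ⊢
      exact hsgn j hj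
  have h01 : ∑ i, ε i * f (γ 1) i ≤ ∑ i, ε i * f (γ 0) i :=
    anti (left_mem_Icc.2 zero_le_one) (right_mem_Icc.2 zero_le_one) zero_le_one
  have hγ1 : γ 1 = a := by funext i; simp [hγdef]
  have hγ0 : γ 0 = b := by funext i; simp [hγdef]
  rw [hγ1, hγ0] at h01
  have : ∑ i, ε i * (f a i - f b i) = (∑ i, ε i * f a i) - ∑ i, ε i * f b i := by
    rw [← Finset.sum_sub_distrib]
    congr 1; funext i; ring
  linarith [h01, this.le, this.ge]


/-- if `f` is continuously differentiable on a neighborhood of a convex set `D`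
and at every point of `D` its Jacobian is Metzler with nonpositive column sums, then any two
solutions of `u' = f u` remaining in `D` on `[0, T]` satisfy
`‖x t - y t‖₁ ≤ ‖x 0 - y 0‖₁`: the dynamics are `l1`-nonexpansive on `D`. -/
theorem l1_nonexpansive_of_metzler_nonpositive_columns
    {n : ℕ} (D : Set (Fin n → ℝ)) (hD : Convex ℝ D)
    (f : (Fin n → ℝ) → (Fin n → ℝ))
    (U : Set (Fin n → ℝ)) (hU : IsOpen U) (hDU : D ⊆ U)
    (hf : ContDiffOn ℝ 1 f U)
    (hMetzler : ∀ x ∈ D, ∀ i j, i ≠ j → 0 ≤ fderiv ℝ f x (Pi.single j 1) i)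
    (hcol : ∀ x ∈ D, ∀ j, ∑ i, fderiv ℝ f x (Pi.single j 1) i ≤ 0)
    {T : ℝ} (hT : 0 ≤ T)
    (x y : ℝ → Fin n → ℝ)
    (hx : ∀ t ∈ Set.Icc (0 : ℝ) T, HasDerivWithinAt x (f (x t)) (Set.Icc 0 T) t)
    (hy : ∀ t ∈ Set.Icc (0 : ℝ) T, HasDerivWithinAt y (f (y t)) (Set.Icc 0 T) t)
    (hxD : ∀ t ∈ Set.Icc (0 : ℝ) T, x t ∈ D)
    (hyD : ∀ t ∈ Set.Icc (0 : ℝ) T, y t ∈ D) :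
    ∀ t ∈ Set.Icc (0 : ℝ) T, ∑ i, |x t i - y t i| ≤ ∑ i, |x 0 i - y 0 i| := by
  -- componentwise derivatives of the difference
  have hw : ∀ t ∈ Icc (0:ℝ) T, ∀ i, HasDerivWithinAt (fun s => x s i - y s i)
      (f (x t) i - f (y t) i) (Icc 0 T) t := by
    intro t ht i
    exact ((hasDerivWithinAt_pi.1 (hx t ht)) i).sub ((hasDerivWithinAt_pi.1 (hy t ht)) i)
  set ε : ℝ → Fin n → ℝ := fun t i =>
    if x t i - y t i = 0 then Real.sign (f (x t) i - f (y t) i)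
    else Real.sign (x t i - y t i) with hεdef
  set G : ℝ → ℝ := fun t => ∑ i, ε t i * (f (x t) i - f (y t) i) with hGdef
  set g : ℝ → ℝ := fun t => ∑ i, |x t i - y t i| with hgdef
  -- right derivative of g
  have hg' : ∀ t ∈ Icc (0:ℝ) T, HasDerivWithinAt g (G t) (Icc t T) t := by
    intro t ht
    apply HasDerivWithinAt.fun_sum
    intro i _
    have hwi : HasDerivWithinAt (fun s => x s i - y s i) (f (x t) i - f (y t) i) (Icc t T) t :=
      (hw t ht i).mono (Icc_subset_Icc ht.1 le_rfl)
    by_cases h0 : x t i - y t i = 0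
    · have := hasDerivWithinAt_abs_of_zero Icc_subset_Ici_self hwi h0
      have habs : |f (x t) i - f (y t) i| = ε t i * (f (x t) i - f (y t) i) := by
        rw [hεdef]; simp only [if_pos h0]
        rw [real_sign_mul_self]
      rwa [habs] at this
    · have := hasDerivWithinAt_abs_of_ne hwi h0
      have habs : Real.sign (x t i - y t i) = ε t i := by
        rw [hεdef]; simp only [if_neg h0]
      rwa [habs] at this
  -- bound on G
  have hG : ∀ t ∈ Icc (0:ℝ) T, G t ≤ 0 := by
    intro t ht
    refine dissip hD hU hDU hf hMetzler hcol (hxD t ht) (hyD t ht) (ε t) ?_ ?_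
    · intro i
      rw [hεdef]
      by_cases h0 : x t i - y t i = 0 <;> simp only [if_pos, if_neg, h0] <;>
        first
          | exact abs_real_sign_le _
          | (simp only [if_pos h0]; exact abs_real_sign_le _)
          | (simp only [if_neg h0]; exact abs_real_sign_le _)
    · intro j hj
      rw [hεdef]
      simp only [if_neg hj]
  -- continuity of g
  have hgc : ContinuousOn g (Icc 0 T) := by
    apply continuousOn_finset_sum
    intro i _
    exact fun t ht => ((hw t ht i).continuousWithinAt).abs
  -- Gronwall
  have key := le_gronwallBound_of_liminf_deriv_right_le (f := g) (f' := G)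
    (δ := g 0) (K := 0) (ε := 0) (a := 0) (b := T) hgc ?_ le_rfl ?_
  · intro t ht
    have := key t ht
    simpa [gronwallBound] using this
  · intro t ht r hr
    have hderiv := hg' t (Ico_subset_Icc_self ht)
    rw [hasDerivWithinAt_iff_tendsto_slope] at hderiv
    have hsub : Ioc t T ⊆ Icc t T \ {t} := fun z hz => ⟨⟨hz.1.le, hz.2⟩, ne_of_gt hz.1⟩
    have hten : Tendsto (slope g t) (𝓝[>] t) (𝓝 (G t)) := by
      rw [← nhdsWithin_Ioc_eq_nhdsGT ht.2]
      exact hderiv.mono_left (nhdsWithin_mono t hsub)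
    have hev : ∀ᶠ z in 𝓝[>] t, slope g t z < r := hten (Iio_mem_nhds hr)
    refine hev.frequently.mono ?_
    intro z hz
    rwa [slope_def_field, div_eq_inv_mul] at hz
  · intro t _
    have := hG t (Ico_subset_Icc_self ‹t ∈ Ico 0 T›)
    simpa using this
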